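/- arXiv:2509.08293 — 2 statements merged into one kernel-verified Lean document; each statement's English description precedes it below -/
import Mathlib

section
/- Let 1 ≤ p, q, r ≤ ∞ with 1/p = 1/q + 1/r. If T : E₁ × ⋯ × E_m → F is a positive weakly (q,r)-dominated m-linear operator, u_j : G_j → E_j are positive bounded linear operators (1 ≤ j ≤ m), and v : F → H is a positive bounded linear operator, then v ∘ T ∘ (u₁, ..., u_m) is positive weakly (q,r)-dominated and d⁺(v ∘ T ∘ (u₁,...,u_m)) ≤ d⁺(T) · ‖u₁‖ ⋯ ‖u_m‖ · ‖v‖. -/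
open scoped BigOperators

section

/-- A functional on a Banach lattice is positive if it is nonnegative on the positive cone. -/
def IsPosFunc {F : Type*} [NormedAddCommGroup F] [Lattice F] [HasSolidNorm F] [IsOrderedAddMonoid F] [NormedSpace ℝ F]
    (f : F →L[ℝ] ℝ) : Prop := ∀ y : F, 0 ≤ y → 0 ≤ f y

/-- A continuous `m`-linear form is positive if it is nonnegative on positive tuples. -/
def IsPosForm {m : ℕ} {E : Fin m → Type*} [∀ i, NormedAddCommGroup (E i)] [∀ i, Lattice (E i)] [∀ i, HasSolidNorm (E i)] [∀ i, IsOrderedAddMonoid (E i)]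
    [∀ i, NormedSpace ℝ (E i)] (φ : ContinuousMultilinearMap ℝ E ℝ) : Prop :=
  ∀ x : ∀ i, E i, (∀ i, 0 ≤ x i) → 0 ≤ φ x

/-- `sup_{φ ∈ B⁺_{L^r(E₁,…,E_m)}} (∑ᵢ φ(x_i^1,…,x_i^m)^q)^{1/q}`. -/
noncomputable def posFormBallSup {m : ℕ} {E : Fin m → Type*}
    [∀ i, NormedAddCommGroup (E i)] [∀ i, Lattice (E i)] [∀ i, HasSolidNorm (E i)] [∀ i, IsOrderedAddMonoid (E i)] [∀ i, NormedSpace ℝ (E i)]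
    (q : ℝ) {n : ℕ} (x : Fin n → ∀ j, E j) : ℝ :=
  ⨆ φ : {φ : ContinuousMultilinearMap ℝ E ℝ // ‖φ‖ ≤ 1 ∧ IsPosForm φ},
    (∑ i, (φ.1 (x i)) ^ q) ^ (1 / q)

/-- `sup_{y** ∈ B⁺_{F**}} (∑ᵢ ⟨y_i*, y**⟩^r)^{1/r}`. -/
noncomputable def posBidualBallSup {F : Type*} [NormedAddCommGroup F] [Lattice F] [HasSolidNorm F] [IsOrderedAddMonoid F]
    [NormedSpace ℝ F] (r : ℝ) {n : ℕ} (y : Fin n → F →L[ℝ] ℝ) : ℝ :=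
  ⨆ Φ : {Φ : (F →L[ℝ] ℝ) →L[ℝ] ℝ // ‖Φ‖ ≤ 1 ∧ ∀ g, IsPosFunc g → 0 ≤ Φ g},
    (∑ i, (Φ.1 (y i)) ^ r) ^ (1 / r)

/-- `T` is positive weakly `(q,r)`-dominated with constant `C`. -/
def PWDC {m : ℕ} {E : Fin m → Type*} [∀ i, NormedAddCommGroup (E i)] [∀ i, Lattice (E i)] [∀ i, HasSolidNorm (E i)] [∀ i, IsOrderedAddMonoid (E i)]
    [∀ i, NormedSpace ℝ (E i)] {F : Type*} [NormedAddCommGroup F] [Lattice F] [HasSolidNorm F] [IsOrderedAddMonoid F] [NormedSpace ℝ F]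
    (p q r : ℝ) (T : ContinuousMultilinearMap ℝ E F) (C : ℝ) : Prop :=
  ∀ (n : ℕ) (x : Fin n → ∀ j, E j) (y : Fin n → F →L[ℝ] ℝ),
    (∀ i j, 0 ≤ x i j) → (∀ i, IsPosFunc (y i)) →
    (∑ i, ((y i) (T (x i))) ^ p) ^ (1 / p) ≤
      C * posFormBallSup q x * posBidualBallSup r y

/-- `d⁺(T)`, the infimum of admissible constants. -/
noncomputable def dplus {m : ℕ} {E : Fin m → Type*} [∀ i, NormedAddCommGroup (E i)] [∀ i, Lattice (E i)] [∀ i, HasSolidNorm (E i)] [∀ i, IsOrderedAddMonoid (E i)]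
    [∀ i, NormedSpace ℝ (E i)] {F : Type*} [NormedAddCommGroup F] [Lattice F] [HasSolidNorm F] [IsOrderedAddMonoid F] [NormedSpace ℝ F]
    (p q r : ℝ) (T : ContinuousMultilinearMap ℝ E F) : ℝ :=
  sInf {C : ℝ | 0 ≤ C ∧ PWDC p q r T C}

section AuxPWD
variable {m : ℕ} {E : Fin m → Type*} [∀ i, NormedAddCommGroup (E i)] [∀ i, Lattice (E i)] [∀ i, HasSolidNorm (E i)] [∀ i, IsOrderedAddMonoid (E i)]
    [∀ i, NormedSpace ℝ (E i)]

instance posFormNonempty : Nonempty {φ : ContinuousMultilinearMap ℝ E ℝ // ‖φ‖ ≤ 1 ∧ IsPosForm φ} :=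
  ⟨⟨0, by rw [norm_zero]; exact zero_le_one, fun x hx => le_of_eq rfl⟩⟩

instance posBidualNonempty {F : Type*} [NormedAddCommGroup F] [Lattice F] [HasSolidNorm F] [IsOrderedAddMonoid F] [NormedSpace ℝ F] :
    Nonempty {Φ : (F →L[ℝ] ℝ) →L[ℝ] ℝ // ‖Φ‖ ≤ 1 ∧ ∀ g, IsPosFunc g → 0 ≤ Φ g} :=
  ⟨⟨0, by rw [ContinuousLinearMap.opNorm_zero]; exact zero_le_one, fun g hg => le_of_eq rfl⟩⟩

lemma posForm_bdd (q : ℝ) (hq : 0 ≤ q) {n : ℕ} (x : Fin n → ∀ j, E j)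
    (hx : ∀ i j, 0 ≤ x i j) :
    BddAbove (Set.range fun φ : {φ : ContinuousMultilinearMap ℝ E ℝ // ‖φ‖ ≤ 1 ∧ IsPosForm φ} =>
      (∑ i, (φ.1 (x i)) ^ q) ^ (1 / q)) := by
  refine ⟨(∑ i, (∏ j, ‖x i j‖) ^ q) ^ (1 / q), ?_⟩
  rintro _ ⟨φ, rfl⟩
  refine Real.rpow_le_rpow
    (Finset.sum_nonneg fun i _ => Real.rpow_nonneg (φ.2.2 _ (hx i)) q)
    (Finset.sum_le_sum fun i _ => Real.rpow_le_rpow (φ.2.2 _ (hx i)) ?_ hq)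
    (by positivity)
  calc φ.1 (x i) ≤ ‖φ.1 (x i)‖ := le_abs_self _
    _ ≤ ‖φ.1‖ * ∏ j, ‖x i j‖ := φ.1.le_opNorm _
    _ ≤ 1 * ∏ j, ‖x i j‖ := by
        exact mul_le_mul_of_nonneg_right φ.2.1 (Finset.prod_nonneg fun j _ => norm_nonneg _)
    _ = ∏ j, ‖x i j‖ := one_mul _

lemma posBidual_bdd {F : Type*} [NormedAddCommGroup F] [Lattice F] [HasSolidNorm F] [IsOrderedAddMonoid F] [NormedSpace ℝ F]
    (r : ℝ) (hr : 0 ≤ r) {n : ℕ} (y : Fin n → F →L[ℝ] ℝ) (hy : ∀ i, IsPosFunc (y i)) :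
    BddAbove (Set.range fun Φ : {Φ : (F →L[ℝ] ℝ) →L[ℝ] ℝ // ‖Φ‖ ≤ 1 ∧ ∀ g, IsPosFunc g → 0 ≤ Φ g} =>
      (∑ i, (Φ.1 (y i)) ^ r) ^ (1 / r)) := by
  refine ⟨(∑ i, ‖y i‖ ^ r) ^ (1 / r), ?_⟩
  rintro _ ⟨Φ, rfl⟩
  refine Real.rpow_le_rpow
    (Finset.sum_nonneg fun i _ => Real.rpow_nonneg (Φ.2.2 _ (hy i)) r)
    (Finset.sum_le_sum fun i _ => Real.rpow_le_rpow (Φ.2.2 _ (hy i)) ?_ hr)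
    (by positivity)
  calc Φ.1 (y i) ≤ ‖Φ.1 (y i)‖ := le_abs_self _
    _ ≤ ‖Φ.1‖ * ‖y i‖ := Φ.1.le_opNorm _
    _ ≤ 1 * ‖y i‖ := mul_le_mul_of_nonneg_right Φ.2.1 (norm_nonneg _)
    _ = ‖y i‖ := one_mul _

lemma posFormBallSup_nonneg (q : ℝ) {n : ℕ} (x : Fin n → ∀ j, E j)
    (hx : ∀ i j, 0 ≤ x i j) : 0 ≤ posFormBallSup q x :=
  Real.iSup_nonneg fun φ => Real.rpow_nonneg
    (Finset.sum_nonneg fun i _ => Real.rpow_nonneg (φ.2.2 _ (hx i)) q) _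

lemma posBidualBallSup_nonneg {F : Type*} [NormedAddCommGroup F] [Lattice F] [HasSolidNorm F] [IsOrderedAddMonoid F] [NormedSpace ℝ F]
    (r : ℝ) {n : ℕ} (y : Fin n → F →L[ℝ] ℝ) (hy : ∀ i, IsPosFunc (y i)) :
    0 ≤ posBidualBallSup r y :=
  Real.iSup_nonneg fun Φ => Real.rpow_nonneg
    (Finset.sum_nonneg fun i _ => Real.rpow_nonneg (Φ.2.2 _ (hy i)) r) _

lemma posFormBallSup_comp {G : Fin m → Type*} [∀ i, NormedAddCommGroup (G i)] [∀ i, Lattice (G i)] [∀ i, HasSolidNorm (G i)] [∀ i, IsOrderedAddMonoid (G i)]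
    [∀ i, NormedSpace ℝ (G i)] (q : ℝ) (hq : 1 ≤ q) {n : ℕ} (x : Fin n → ∀ j, G j)
    (hx : ∀ i j, 0 ≤ x i j) (u : ∀ j, G j →L[ℝ] E j) (hu : ∀ j (z : G j), 0 ≤ z → 0 ≤ u j z) :
    posFormBallSup q (fun i j => u j (x i j)) ≤ (∏ j, ‖u j‖) * posFormBallSup q x := by
  have hq0 : (0 : ℝ) < q := lt_of_lt_of_le one_pos hq
  set K := ∏ j, ‖u j‖ with hKdef
  have hK0 : 0 ≤ K := Finset.prod_nonneg fun j _ => norm_nonneg _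
  refine ciSup_le fun φ => ?_
  set ψ := φ.1.compContinuousLinearMap u with hψdef
  have hψnorm : ‖ψ‖ ≤ K := by
    calc ‖ψ‖ ≤ ‖φ.1‖ * K := φ.1.norm_compContinuousLinearMap_le u
      _ ≤ 1 * K := mul_le_mul_of_nonneg_right φ.2.1 hK0
      _ = K := one_mul _
  have hψpos : IsPosForm ψ := fun z hz => φ.2.2 _ (fun j => hu j _ (hz j))
  have hval : ∀ i, φ.1 (fun j => u j (x i j)) = ψ (x i) := fun i =>
    (φ.1.compContinuousLinearMap_apply u (x i)).symm
  rcases eq_or_lt_of_le hK0 with hK | hK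
  · -- K = 0, ψ = 0
    have hψ0 : ψ = 0 := by
      rw [← norm_le_zero_iff]; rw [← hK] at hψnorm; exact hψnorm
    have : ∀ i, φ.1 (fun j => u j (x i j)) = 0 := fun i => by rw [hval i, hψ0]; rfl
    simp only [this, Real.zero_rpow (ne_of_gt hq0), Finset.sum_const, smul_zero,
      Real.zero_rpow (by positivity : (1:ℝ)/q ≠ 0)]
    exact mul_nonneg hK0 (posFormBallSup_nonneg q x hx)
  · set ψ' : ContinuousMultilinearMap ℝ G ℝ := K⁻¹ • ψ with hψ'def
    have hψ'norm : ‖ψ'‖ ≤ 1 := by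
      calc ‖ψ'‖ ≤ ‖K⁻¹‖ * ‖ψ‖ := ψ.opNorm_smul_le K⁻¹
        _ = K⁻¹ * ‖ψ‖ := by rw [Real.norm_eq_abs, abs_of_pos (inv_pos.mpr hK)]
        _ ≤ K⁻¹ * K := mul_le_mul_of_nonneg_left hψnorm (le_of_lt (inv_pos.mpr hK))
        _ = 1 := inv_mul_cancel₀ (ne_of_gt hK)
    have hψ'pos : IsPosForm ψ' := fun z hz => by
      have := hψpos z hz
      simp only [hψ'def, ContinuousMultilinearMap.smul_apply, smul_eq_mul]
      positivity
    have hval' : ∀ i, φ.1 (fun j => u j (x i j)) = K * ψ' (x i) := fun i => by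
      rw [hval i, hψ'def]
      simp only [ContinuousMultilinearMap.smul_apply, smul_eq_mul]
      field_simp
    have hsum : (∑ i, (φ.1 (fun j => u j (x i j))) ^ q) ^ (1 / q)
        = K * (∑ i, (ψ' (x i)) ^ q) ^ (1 / q) := by
      have h1 : ∀ i, (φ.1 (fun j => u j (x i j))) ^ q = K ^ q * (ψ' (x i)) ^ q := fun i => by
        rw [hval' i, Real.mul_rpow (le_of_lt hK) (hψ'pos _ (hx i))]
      rw [Finset.sum_congr rfl fun i _ => h1 i, ← Finset.mul_sum,
        Real.mul_rpow (Real.rpow_nonneg (le_of_lt hK) q)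
          (Finset.sum_nonneg fun i _ => Real.rpow_nonneg (hψ'pos _ (hx i)) q)]
      congr 1
      rw [← Real.rpow_mul (le_of_lt hK), mul_one_div_cancel (ne_of_gt hq0), Real.rpow_one]
    rw [hsum]
    refine mul_le_mul_of_nonneg_left ?_ hK0
    exact le_ciSup (posForm_bdd q (le_of_lt hq0) x hx) ⟨ψ', hψ'norm, hψ'pos⟩

lemma posBidualBallSup_comp {F H : Type*} [NormedAddCommGroup F] [Lattice F] [HasSolidNorm F] [IsOrderedAddMonoid F] [NormedSpace ℝ F]
    [NormedAddCommGroup H] [Lattice H] [HasSolidNorm H] [IsOrderedAddMonoid H] [NormedSpace ℝ H]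
    (r : ℝ) (hr : 1 ≤ r) {n : ℕ} (y : Fin n → H →L[ℝ] ℝ) (hy : ∀ i, IsPosFunc (y i))
    (v : F →L[ℝ] H) (hv : ∀ z : F, 0 ≤ z → 0 ≤ v z) :
    posBidualBallSup r (fun i => (y i).comp v) ≤ ‖v‖ * posBidualBallSup r y := by
  have hr0 : (0:ℝ) < r := lt_of_lt_of_le one_pos hr
  have hy' : ∀ i, IsPosFunc ((y i).comp v) := fun i z hz => hy i _ (hv z hz)
  refine ciSup_le fun Φ => ?_
  set D : (H →L[ℝ] ℝ) →L[ℝ] (F →L[ℝ] ℝ) := (ContinuousLinearMap.compL ℝ F H ℝ).flip v with hD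
  have hDapp : ∀ g : H →L[ℝ] ℝ, D g = g.comp v := fun g => rfl
  set Ψ : (H →L[ℝ] ℝ) →L[ℝ] ℝ := Φ.1.comp D with hΨ
  have hΨnorm : ‖Ψ‖ ≤ ‖v‖ := by
    refine ContinuousLinearMap.opNorm_le_bound _ (norm_nonneg v) fun g => ?_
    calc ‖Ψ g‖ = ‖Φ.1 (g.comp v)‖ := rfl
      _ ≤ ‖Φ.1‖ * ‖g.comp v‖ := Φ.1.le_opNorm _
      _ ≤ 1 * (‖g‖ * ‖v‖) :=
          mul_le_mul Φ.2.1 (ContinuousLinearMap.opNorm_comp_le _ _) (norm_nonneg _) zero_le_one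
      _ = ‖v‖ * ‖g‖ := by ring
  have hΨpos : ∀ g, IsPosFunc g → 0 ≤ Ψ g := fun g hg =>
    Φ.2.2 _ (fun z hz => hg _ (hv z hz))
  have hval : ∀ i, Φ.1 ((y i).comp v) = Ψ (y i) := fun i => rfl
  rcases eq_or_lt_of_le (norm_nonneg v) with hK | hK
  · have hΨ0 : Ψ = 0 := (ContinuousLinearMap.opNorm_zero_iff Ψ).mp
      (le_antisymm (by rw [← hK] at hΨnorm; exact hΨnorm) (norm_nonneg _))
    have hz : ∀ i, Φ.1 ((y i).comp v) = 0 := fun i => by rw [hval i, hΨ0]; rfl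
    simp only [hz, Real.zero_rpow (ne_of_gt hr0), Finset.sum_const, smul_zero,
      Real.zero_rpow (by positivity : (1:ℝ)/r ≠ 0)]
    exact mul_nonneg (norm_nonneg v) (posBidualBallSup_nonneg r y hy)
  · set Ψ' : (H →L[ℝ] ℝ) →L[ℝ] ℝ := ‖v‖⁻¹ • Ψ with hΨ'
    have hΨ'norm : ‖Ψ'‖ ≤ 1 := by
      calc ‖Ψ'‖ ≤ ‖(‖v‖⁻¹)‖ * ‖Ψ‖ := Ψ.opNorm_smul_le (‖v‖⁻¹)
        _ = ‖v‖⁻¹ * ‖Ψ‖ := by rw [Real.norm_eq_abs, abs_of_pos (inv_pos.mpr hK)]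
        _ ≤ ‖v‖⁻¹ * ‖v‖ := mul_le_mul_of_nonneg_left hΨnorm (le_of_lt (inv_pos.mpr hK))
        _ = 1 := inv_mul_cancel₀ (ne_of_gt hK)
    have hΨ'pos : ∀ g, IsPosFunc g → 0 ≤ Ψ' g := fun g hg => by
      have := hΨpos g hg
      simp only [hΨ', ContinuousLinearMap.smul_apply, smul_eq_mul]
      positivity
    have hval' : ∀ i, Φ.1 ((y i).comp v) = ‖v‖ * Ψ' (y i) := fun i => by
      rw [hval i, hΨ']
      simp only [ContinuousLinearMap.smul_apply, smul_eq_mul]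
      field_simp
    have hsum : (∑ i, (Φ.1 ((y i).comp v)) ^ r) ^ (1 / r)
        = ‖v‖ * (∑ i, (Ψ' (y i)) ^ r) ^ (1 / r) := by
      have h1 : ∀ i, (Φ.1 ((y i).comp v)) ^ r = ‖v‖ ^ r * (Ψ' (y i)) ^ r := fun i => by
        rw [hval' i, Real.mul_rpow (le_of_lt hK) (hΨ'pos _ (hy i))]
      rw [Finset.sum_congr rfl fun i _ => h1 i, ← Finset.mul_sum,
        Real.mul_rpow (Real.rpow_nonneg (le_of_lt hK) r)
          (Finset.sum_nonneg fun i _ => Real.rpow_nonneg (hΨ'pos _ (hy i)) r)]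
      congr 1
      rw [← Real.rpow_mul (le_of_lt hK), mul_one_div_cancel (ne_of_gt hr0), Real.rpow_one]
    rw [show (∑ i, (Φ.1 ((fun i => (y i).comp v) i)) ^ r) ^ (1 / r)
        = (∑ i, (Φ.1 ((y i).comp v)) ^ r) ^ (1 / r) from rfl, hsum]
    refine mul_le_mul_of_nonneg_left ?_ (norm_nonneg v)
    exact le_ciSup (posBidual_bdd r (le_of_lt hr0) y hy) ⟨Ψ', hΨ'norm, hΨ'pos⟩

lemma pwdc_comp_aux {m : ℕ} {E G : Fin m → Type*}
    [∀ i, NormedAddCommGroup (E i)] [∀ i, Lattice (E i)] [∀ i, HasSolidNorm (E i)] [∀ i, IsOrderedAddMonoid (E i)] [∀ i, NormedSpace ℝ (E i)]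
    [∀ i, NormedAddCommGroup (G i)] [∀ i, Lattice (G i)] [∀ i, HasSolidNorm (G i)] [∀ i, IsOrderedAddMonoid (G i)] [∀ i, NormedSpace ℝ (G i)]
    {F H : Type*} [NormedAddCommGroup F] [Lattice F] [HasSolidNorm F] [IsOrderedAddMonoid F] [NormedSpace ℝ F]
    [NormedAddCommGroup H] [Lattice H] [HasSolidNorm H] [IsOrderedAddMonoid H] [NormedSpace ℝ H]
    (p q r : ℝ) (hq : 1 ≤ q) (hr : 1 ≤ r)
    (T : ContinuousMultilinearMap ℝ E F)
    (u : ∀ j, G j →L[ℝ] E j) (hu : ∀ j (z : G j), 0 ≤ z → 0 ≤ u j z)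
    (v : F →L[ℝ] H) (hv : ∀ z : F, 0 ≤ z → 0 ≤ v z)
    (C : ℝ) (hC0 : 0 ≤ C) (hC : PWDC p q r T C) :
    PWDC p q r ((v.compContinuousMultilinearMap T).compContinuousLinearMap u)
      (C * (∏ j, ‖u j‖) * ‖v‖) := by
  intro n x y hx hy
  have hx' : ∀ i j, 0 ≤ u j (x i j) := fun i j => hu j _ (hx i j)
  have hy' : ∀ i, IsPosFunc ((y i).comp v) := fun i z hz => hy i _ (hv z hz)
  have key := hC n (fun i j => u j (x i j)) (fun i => (y i).comp v) hx' hy'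
  have happ : ∀ i, (y i) (((v.compContinuousMultilinearMap T).compContinuousLinearMap u) (x i))
      = ((y i).comp v) (T (fun j => u j (x i j))) := fun i => rfl
  have h1 : 0 ≤ posFormBallSup q (fun i j => u j (x i j)) :=
    posFormBallSup_nonneg _ _ hx'
  have h2 : 0 ≤ posBidualBallSup r (fun i => (y i).comp v) :=
    posBidualBallSup_nonneg _ _ hy'
  have h3 : 0 ≤ posFormBallSup q x := posFormBallSup_nonneg _ _ hx
  have hKu : (0:ℝ) ≤ ∏ j, ‖u j‖ := Finset.prod_nonneg fun j _ => norm_nonneg _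
  calc (∑ i, ((y i) (((v.compContinuousMultilinearMap T).compContinuousLinearMap u) (x i))) ^ p) ^ (1/p)
      = (∑ i, (((y i).comp v) (T (fun j => u j (x i j)))) ^ p) ^ (1/p) := by
        simp only [happ]
    _ ≤ C * posFormBallSup q (fun i j => u j (x i j))
        * posBidualBallSup r (fun i => (y i).comp v) := key
    _ ≤ C * ((∏ j, ‖u j‖) * posFormBallSup q x) * (‖v‖ * posBidualBallSup r y) := by
        refine mul_le_mul
          (mul_le_mul_of_nonneg_left (posFormBallSup_comp q hq x hx u hu) hC0)
          (posBidualBallSup_comp r hr y hy v hv) h2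
          (mul_nonneg hC0 (mul_nonneg hKu h3))
    _ = C * (∏ j, ‖u j‖) * ‖v‖ * posFormBallSup q x * posBidualBallSup r y := by ring

end AuxPWD

/-- Ideal property: composing a positive weakly `(q,r)`-dominated operator with positive
linear operators `u_j` and `v` stays in the class, with
`d⁺(v ∘ T ∘ (u₁,…,u_m)) ≤ d⁺(T)·‖u₁‖⋯‖u_m‖·‖v‖`. -/
theorem pwd_comp {m : ℕ} {E G : Fin m → Type*}
    [∀ i, NormedAddCommGroup (E i)] [∀ i, Lattice (E i)] [∀ i, HasSolidNorm (E i)] [∀ i, IsOrderedAddMonoid (E i)] [∀ i, NormedSpace ℝ (E i)]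
    [∀ i, CompleteSpace (E i)]
    [∀ i, NormedAddCommGroup (G i)] [∀ i, Lattice (G i)] [∀ i, HasSolidNorm (G i)] [∀ i, IsOrderedAddMonoid (G i)] [∀ i, NormedSpace ℝ (G i)]
    [∀ i, CompleteSpace (G i)]
    {F H : Type*} [NormedAddCommGroup F] [Lattice F] [HasSolidNorm F] [IsOrderedAddMonoid F] [NormedSpace ℝ F] [CompleteSpace F]
    [NormedAddCommGroup H] [Lattice H] [HasSolidNorm H] [IsOrderedAddMonoid H] [NormedSpace ℝ H] [CompleteSpace H]
    (p q r : ℝ) (hp : 1 ≤ p) (hq : 1 ≤ q) (hr : 1 ≤ r) (hpqr : 1 / p = 1 / q + 1 / r)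
    (T : ContinuousMultilinearMap ℝ E F)
    (hT : ∃ C, 0 ≤ C ∧ PWDC p q r T C)
    (u : ∀ j, G j →L[ℝ] E j) (hu : ∀ j (z : G j), 0 ≤ z → 0 ≤ u j z)
    (v : F →L[ℝ] H) (hv : ∀ z : F, 0 ≤ z → 0 ≤ v z) :
    (∃ C, 0 ≤ C ∧
        PWDC p q r ((v.compContinuousMultilinearMap T).compContinuousLinearMap u) C) ∧
      dplus p q r ((v.compContinuousMultilinearMap T).compContinuousLinearMap u) ≤
        dplus p q r T * (∏ j, ‖u j‖) * ‖v‖ := by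

  obtain ⟨C0, hC00, hC0⟩ := hT
  have hKu : (0:ℝ) ≤ ∏ j, ‖u j‖ := Finset.prod_nonneg fun j _ => norm_nonneg _
  have hKv : (0:ℝ) ≤ (∏ j, ‖u j‖) * ‖v‖ := mul_nonneg hKu (norm_nonneg v)
  have mem : ∀ C : ℝ, 0 ≤ C → PWDC p q r T C →
      (C * (∏ j, ‖u j‖) * ‖v‖) ∈
        {C : ℝ | 0 ≤ C ∧
          PWDC p q r ((v.compContinuousMultilinearMap T).compContinuousLinearMap u) C} :=
    fun C h0 h => ⟨by positivity, pwdc_comp_aux p q r hq hr T u hu v hv C h0 h⟩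
  constructor
  · exact ⟨C0 * (∏ j, ‖u j‖) * ‖v‖, mem C0 hC00 hC0⟩
  · have hSne : {C : ℝ | 0 ≤ C ∧ PWDC p q r T C}.Nonempty := ⟨C0, hC00, hC0⟩
    have hbdd : BddBelow {C : ℝ | 0 ≤ C ∧
        PWDC p q r ((v.compContinuousMultilinearMap T).compContinuousLinearMap u) C} :=
      ⟨0, fun b hb => hb.1⟩
    have h1 : ∀ C ∈ {C : ℝ | 0 ≤ C ∧ PWDC p q r T C},
        dplus p q r ((v.compContinuousMultilinearMap T).compContinuousLinearMap u) ≤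
          ((∏ j, ‖u j‖) * ‖v‖) * C := by
      intro C hCmem
      have h := csInf_le hbdd (mem C hCmem.1 hCmem.2)
      calc dplus p q r ((v.compContinuousMultilinearMap T).compContinuousLinearMap u)
          ≤ C * (∏ j, ‖u j‖) * ‖v‖ := h
        _ = ((∏ j, ‖u j‖) * ‖v‖) * C := by ring
    rcases eq_or_lt_of_le hKv with hK | hK
    · have h := h1 C0 ⟨hC00, hC0⟩
      rw [← hK, zero_mul] at h
      have hgoal : dplus p q r T * (∏ j, ‖u j‖) * ‖v‖
          = dplus p q r T * ((∏ j, ‖u j‖) * ‖v‖) := by ring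
      rw [hgoal, ← hK, mul_zero]
      exact h
    · have hlb : dplus p q r ((v.compContinuousMultilinearMap T).compContinuousLinearMap u)
          / ((∏ j, ‖u j‖) * ‖v‖) ≤ sInf {C : ℝ | 0 ≤ C ∧ PWDC p q r T C} := by
        refine le_csInf hSne fun C hCmem => ?_
        rw [div_le_iff₀ hK]
        calc dplus p q r ((v.compContinuousMultilinearMap T).compContinuousLinearMap u)
            ≤ ((∏ j, ‖u j‖) * ‖v‖) * C := h1 C hCmem
          _ = C * ((∏ j, ‖u j‖) * ‖v‖) := by ring
      have h4 := (div_le_iff₀ hK).mp hlb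
      have h3 : dplus p q r T = sInf {C : ℝ | 0 ≤ C ∧ PWDC p q r T C} := rfl
      calc dplus p q r ((v.compContinuousMultilinearMap T).compContinuousLinearMap u)
          ≤ sInf {C : ℝ | 0 ≤ C ∧ PWDC p q r T C} * ((∏ j, ‖u j‖) * ‖v‖) := h4
        _ = dplus p q r T * (∏ j, ‖u j‖) * ‖v‖ := by rw [← h3]; ring

end
end

section
/- Let E₁, ..., E_m, F be Banach lattices and u = Σ_{i=1}^n λ_i x_i^1 ⊗ ⋯ ⊗ x_i^m ⊗ y_i ∈ E₁ ⊗ ⋯ ⊗ E_m ⊗ F. Then u = 0 if and only if Σ_i λ_i φ(x_i^1, ..., x_i^m) y*(y_i) = 0 for every positive m-linear form φ on E₁ × ⋯ × E_m and every positive functional y* ∈ (F*)⁺. -/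
open scoped BigOperators TensorProduct
open PiTensorProduct

section Aux

/-- Riesz–Kantorovich: every continuous functional on a normed lattice is a difference of
two positive continuous functionals. -/
private lemma posDecomp {G : Type*} [NormedAddCommGroup G] [Lattice G] [IsOrderedAddMonoid G]
    [HasSolidNorm G] [NormedSpace ℝ G]
    (f : G →L[ℝ] ℝ) :
    ∃ p q : G →L[ℝ] ℝ, (∀ z : G, 0 ≤ z → 0 ≤ p z) ∧ (∀ z : G, 0 ≤ z → 0 ≤ q z) ∧
      ∀ z : G, f z = p z - q z := by
  classical
  set P : G → ℝ := fun a => sSup (f '' Set.Icc 0 a) with hPdef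
  have hub : ∀ a : G, ∀ r ∈ f '' Set.Icc 0 a, r ≤ ‖f‖ * ‖a‖ := by
    rintro a _ ⟨y, ⟨hy0, hya⟩, rfl⟩
    have hy : ‖y‖ ≤ ‖a‖ := by
      apply HasSolidNorm.solid
      rw [abs_of_nonneg hy0]
      exact hya.trans (le_abs_self a)
    calc f y ≤ |f y| := le_abs_self _
      _ = ‖f y‖ := (Real.norm_eq_abs _).symm
      _ ≤ ‖f‖ * ‖y‖ := f.le_opNorm y
      _ ≤ ‖f‖ * ‖a‖ := mul_le_mul_of_nonneg_left hy (norm_nonneg f)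
  have hbdd : ∀ a : G, BddAbove (f '' Set.Icc 0 a) := fun a => ⟨‖f‖ * ‖a‖, hub a⟩
  have hmem0 : ∀ a : G, 0 ≤ a → (0 : ℝ) ∈ f '' Set.Icc 0 a := fun a ha =>
    ⟨0, ⟨le_refl 0, ha⟩, map_zero f⟩
  have hne : ∀ a : G, 0 ≤ a → (f '' Set.Icc 0 a).Nonempty := fun a ha => ⟨0, hmem0 a ha⟩
  have hP0 : ∀ a : G, 0 ≤ a → 0 ≤ P a := fun a ha => le_csSup (hbdd a) (hmem0 a ha)
  have hPge : ∀ a : G, 0 ≤ a → f a ≤ P a := fun a ha =>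
    le_csSup (hbdd a) ⟨a, ⟨ha, le_refl a⟩, rfl⟩
  have hPnorm : ∀ a : G, 0 ≤ a → P a ≤ ‖f‖ * ‖a‖ := fun a ha => csSup_le (hne a ha) (hub a)
  have hPadd : ∀ a b : G, 0 ≤ a → 0 ≤ b → P (a + b) = P a + P b := by
    intro a b ha hb
    apply le_antisymm
    · apply csSup_le (hne _ (add_nonneg ha hb))
      rintro _ ⟨y, ⟨hy0, hyab⟩, rfl⟩
      have h1 : y ⊓ a ∈ Set.Icc 0 a := ⟨le_inf hy0 ha, inf_le_right⟩
      have h2 : y - y ⊓ a ∈ Set.Icc 0 b := by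
        constructor
        · simp only [Set.mem_setOf_eq, sub_nonneg]
          exact inf_le_left
        · rw [sub_inf]
          apply sup_le
          · simpa using hb
          · exact sub_le_iff_le_add'.mpr hyab
      have hsplit : f y = f (y ⊓ a) + f (y - y ⊓ a) := by
        rw [← map_add]
        congr 1
        abel
      rw [hsplit]
      exact add_le_add (le_csSup (hbdd a) ⟨_, h1, rfl⟩) (le_csSup (hbdd b) ⟨_, h2, rfl⟩)
    · have key : ∀ y₁ ∈ Set.Icc (0 : G) a, P b ≤ P (a + b) - f y₁ := by
        intro y₁ hy₁
        apply csSup_le (hne b hb)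
        rintro _ ⟨y₂, hy₂, rfl⟩
        rw [le_sub_iff_add_le, add_comm]
        calc f y₁ + f y₂ = f (y₁ + y₂) := (map_add f _ _).symm
          _ ≤ P (a + b) := le_csSup (hbdd _)
              ⟨y₁ + y₂, ⟨add_nonneg hy₁.1 hy₂.1, add_le_add hy₁.2 hy₂.2⟩, rfl⟩
      have h2 : P a ≤ P (a + b) - P b := by
        apply csSup_le (hne a ha)
        rintro _ ⟨y₁, hy₁, rfl⟩
        have := key y₁ hy₁
        linarith
      linarith
  have hPsub : ∀ a b c d : G, 0 ≤ a → 0 ≤ b → 0 ≤ c → 0 ≤ d → a - b = c - d →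
      P a - P b = P c - P d := by
    intro a b c d ha hb hc hd h
    have h' : a + d = c + b := by
      rw [sub_eq_sub_iff_add_eq_add] at h
      exact h
    have e1 := hPadd a d ha hd
    have e2 := hPadd c b hc hb
    rw [h', e2] at e1
    linarith
  set g : G → ℝ := fun z => P z⁺ - P z⁻ with hgdef
  have hgadd : ∀ z w : G, g (z + w) = g z + g w := by
    intro z w
    have hdec : (z + w)⁺ - (z + w)⁻ = (z⁺ + w⁺) - (z⁻ + w⁻) := by
      rw [posPart_sub_negPart]
      have : z⁺ + w⁺ - (z⁻ + w⁻) = (z⁺ - z⁻) + (w⁺ - w⁻) := by abel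
      rw [this, posPart_sub_negPart, posPart_sub_negPart]
    have h1 := hPsub _ _ _ _ (posPart_nonneg _) (negPart_nonneg _)
      (add_nonneg (posPart_nonneg z) (posPart_nonneg w))
      (add_nonneg (negPart_nonneg z) (negPart_nonneg w)) hdec
    have h2 := hPadd z⁺ w⁺ (posPart_nonneg _) (posPart_nonneg _)
    have h3 := hPadd z⁻ w⁻ (negPart_nonneg _) (negPart_nonneg _)
    show P (z + w)⁺ - P (z + w)⁻ = (P z⁺ - P z⁻) + (P w⁺ - P w⁻)
    rw [h1, h2, h3]
    ring
  have hgbound : ∀ z : G, ‖g z‖ ≤ 2 * ‖f‖ * ‖z‖ := by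
    intro z
    have hp : ‖z⁺‖ ≤ ‖z‖ := by
      apply HasSolidNorm.solid
      rw [abs_of_nonneg (posPart_nonneg z), ← posPart_add_negPart z]
      exact le_add_of_nonneg_right (negPart_nonneg z)
    have hn : ‖z⁻‖ ≤ ‖z‖ := by
      apply HasSolidNorm.solid
      rw [abs_of_nonneg (negPart_nonneg z), ← posPart_add_negPart z]
      exact le_add_of_nonneg_left (posPart_nonneg z)
    have b1 : P z⁺ ≤ ‖f‖ * ‖z‖ := (hPnorm _ (posPart_nonneg z)).trans
      (mul_le_mul_of_nonneg_left hp (norm_nonneg f))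
    have b2 : P z⁻ ≤ ‖f‖ * ‖z‖ := (hPnorm _ (negPart_nonneg z)).trans
      (mul_le_mul_of_nonneg_left hn (norm_nonneg f))
    have g1 : 0 ≤ P z⁺ := hP0 _ (posPart_nonneg z)
    have g2 : 0 ≤ P z⁻ := hP0 _ (negPart_nonneg z)
    show ‖P z⁺ - P z⁻‖ ≤ 2 * ‖f‖ * ‖z‖
    rw [Real.norm_eq_abs, abs_le]
    constructor <;> linarith
  have hP00 : P 0 = 0 := by
    have h1 : Set.Icc (0 : G) 0 = {0} := Set.Icc_self 0
    simp only [hPdef, h1, Set.image_singleton, map_zero, csSup_singleton]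
  have hgP : ∀ z : G, 0 ≤ z → g z = P z := by
    intro z hz
    show P z⁺ - P z⁻ = P z
    rw [posPart_eq_self.mpr hz, negPart_eq_zero.mpr hz, hP00, sub_zero]
  let gh : G →+ ℝ := AddMonoidHom.mk' g hgadd
  have hghc : Continuous gh :=
    (AddMonoidHomClass.lipschitz_of_bound gh (2 * ‖f‖) hgbound).continuous
  let p : G →L[ℝ] ℝ := gh.toRealLinearMap hghc
  have hpapp : ∀ z : G, p z = g z := fun z =>
    congrFun (AddMonoidHom.coe_toRealLinearMap gh hghc) z
  have hppos : ∀ z : G, 0 ≤ z → 0 ≤ p z := by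
    intro z hz
    rw [hpapp, hgP z hz]
    exact hP0 z hz
  refine ⟨p, p - f, hppos, ?_, ?_⟩
  · intro z hz
    have : (p - f) z = P z - f z := by
      rw [ContinuousLinearMap.sub_apply, hpapp, hgP z hz]
    rw [this]
    exact sub_nonneg.mpr (hPge z hz)
  · intro z
    rw [ContinuousLinearMap.sub_apply]
    ring

/-- Separation in a binary tensor product via one dual space. -/
private lemma pair_sep {V W : Type*} [AddCommGroup V] [Module ℝ V] [AddCommGroup W] [Module ℝ W]
    {n : ℕ} (v : Fin n → V) (w : Fin n → W)
    (h : ∀ f : V →ₗ[ℝ] ℝ, ∑ i, f (v i) • w i = 0) :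
    ∑ i, v i ⊗ₜ[ℝ] w i = (0 : V ⊗[ℝ] W) := by
  classical
  let b := Module.Basis.ofVectorSpace ℝ V
  let e := (TensorProduct.congr b.repr (LinearEquiv.refl ℝ W)).trans
    (TensorProduct.finsuppScalarLeft ℝ W _)
  apply e.injective
  rw [map_zero, map_sum]
  ext k
  rw [Finsupp.finset_sum_apply]
  have hterm : ∀ i, (e (v i ⊗ₜ[ℝ] w i)) k = b.repr (v i) k • w i := by
    intro i
    simp only [e, LinearEquiv.trans_apply, TensorProduct.congr_tmul, LinearEquiv.refl_apply,
      TensorProduct.finsuppScalarLeft_apply_tmul_apply]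
  simp_rw [hterm]
  have := h (b.coord k)
  simpa [Module.Basis.coord_apply] using this

/-- Product over an updated family. -/
private lemma prod_update_eval {m : ℕ} {B : Fin m → Type*} (f : ∀ j, B j) (j₀ : Fin m)
    (h : B j₀) (v : ∀ j, B j → ℝ) :
    ∏ j, v j ((Function.update f j₀ h) j)
      = v j₀ h * ∏ j ∈ Finset.univ.erase j₀, v j (f j) := by
  classical
  have key : (fun j => v j ((Function.update f j₀ h) j))
      = Function.update (fun j => v j (f j)) j₀ (v j₀ h) := by
    funext j
    exact Function.apply_update (fun j (z : B j) => v j z) f j₀ h j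
  rw [key, Finset.prod_update_of_mem (Finset.mem_univ _), Finset.sdiff_singleton_eq_erase]

universe u

/-- Separation in a finite `PiTensorProduct` via elementary dual forms. -/
private lemma pit_sep : ∀ (m : ℕ) (E : Fin m → Type u) [∀ j, AddCommGroup (E j)]
    [∀ j, Module ℝ (E j)] (n : ℕ) (lam : Fin n → ℝ) (x : Fin n → ∀ j, E j),
    (∀ f : ∀ j, E j →ₗ[ℝ] ℝ, ∑ i, lam i * ∏ j, f j (x i j) = 0) →
    ∑ i, lam i • (⨂ₜ[ℝ] j, x i j) = 0 := by
  intro m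
  induction m with
  | zero =>
    intro E _ _ n lam x h
    have h0 := h (fun j => 0)
    simp only [Finset.univ_eq_empty, Finset.prod_empty, mul_one] at h0
    apply (isEmptyEquiv (Fin 0)).injective
    rw [map_zero, map_sum]
    simp only [map_smul, isEmptyEquiv_apply_tprod, smul_eq_mul, mul_one]
    exact h0
  | succ m ih =>
    intro E _ _ n lam x h
    have claim1 : ∀ f₀ : E 0 →ₗ[ℝ] ℝ,
        ∑ i, (lam i * f₀ (x i 0)) • (⨂ₜ[ℝ] j : Fin m, x i j.succ) = 0 := by
      intro f₀
      apply ih (fun j => E j.succ) n (fun i => lam i * f₀ (x i 0)) (fun i j => x i j.succ)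
      intro f'
      have := h (Fin.cases f₀ f')
      simp only [Fin.prod_univ_succ, Fin.cases_zero, Fin.cases_succ] at this
      calc ∑ i, lam i * f₀ (x i 0) * ∏ j : Fin m, f' j (x i j.succ)
          = ∑ i, lam i * (f₀ (x i 0) * ∏ j : Fin m, f' j (x i j.succ)) := by
            apply Finset.sum_congr rfl; intros; ring
        _ = 0 := this
    have claim2 : ∑ i, (x i 0) ⊗ₜ[ℝ] (lam i • (⨂ₜ[ℝ] j : Fin m, x i j.succ)) = 0 := by
      apply pair_sep
      intro f₀
      have := claim1 f₀
      rw [← this]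
      apply Finset.sum_congr rfl
      intro i _
      rw [smul_smul, mul_comm]
    let B : E 0 →ₗ[ℝ] ((⨂[ℝ] j : Fin m, E j.succ) →ₗ[ℝ] ⨂[ℝ] j, E j) :=
      (PiTensorProduct.lift.toLinearMap).comp ((tprod ℝ (s := E)).curryLeft)
    let L := TensorProduct.lift B
    have hL : ∀ i, L ((x i 0) ⊗ₜ[ℝ] (lam i • (⨂ₜ[ℝ] j : Fin m, x i j.succ)))
        = lam i • (⨂ₜ[ℝ] j, x i j) := by
      intro i
      rw [TensorProduct.lift.tmul, map_smul]
      congr 1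
      show PiTensorProduct.lift ((tprod ℝ (s := E)).curryLeft (x i 0))
        (⨂ₜ[ℝ] j : Fin m, x i j.succ) = _
      rw [PiTensorProduct.lift.tprod]
      show (tprod ℝ (s := E)) (Fin.cons (x i 0) fun j => x i j.succ) = _
      congr 1
      exact Fin.cons_self_tail (x i)
    calc ∑ i, lam i • (⨂ₜ[ℝ] j, x i j)
        = L (∑ i, (x i 0) ⊗ₜ[ℝ] (lam i • (⨂ₜ[ℝ] j : Fin m, x i j.succ))) := by
          rw [map_sum]
          exact (Finset.sum_congr rfl fun i _ => (hL i).symm)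
      _ = 0 := by rw [claim2, map_zero]

end Aux

/-- An element `u = ∑ᵢ λᵢ xᵢ¹ ⊗ ⋯ ⊗ xᵢ^m ⊗ yᵢ` of `E₁ ⊗ ⋯ ⊗ E_m ⊗ F` vanishes iff
`∑ᵢ λᵢ φ(xᵢ¹,…,xᵢ^m) y*(yᵢ) = 0` for every positive continuous `m`-linear form `φ` on
`E₁ × ⋯ × E_m` and every positive functional `y* ∈ (F*)⁺`. -/
theorem tensor_eq_zero_iff_pos_forms {m : ℕ} {E : Fin m → Type*}
    [∀ i, NormedAddCommGroup (E i)] [∀ i, Lattice (E i)]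
    [∀ i, IsOrderedAddMonoid (E i)] [∀ i, HasSolidNorm (E i)] [∀ i, NormedSpace ℝ (E i)]
    [∀ i, CompleteSpace (E i)]
    {F : Type*} [NormedAddCommGroup F] [Lattice F]
    [IsOrderedAddMonoid F] [HasSolidNorm F] [NormedSpace ℝ F] [CompleteSpace F]
    (n : ℕ) (lam : Fin n → ℝ) (x : Fin n → ∀ j, E j) (y : Fin n → F) :
    (∑ i, lam i • ((⨂ₜ[ℝ] j, x i j) ⊗ₜ[ℝ] y i)) = 0 ↔
      ∀ (φ : ContinuousMultilinearMap ℝ E ℝ) (g : F →L[ℝ] ℝ),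
        (∀ z : ∀ j, E j, (∀ j, 0 ≤ z j) → 0 ≤ φ z) → (∀ z : F, 0 ≤ z → 0 ≤ g z) →
        ∑ i, lam i * φ (x i) * g (y i) = 0 := by
  classical
  constructor
  · intro hu φ g hφ hg
    let Φ : (⨂[ℝ] j, E j) →ₗ[ℝ] ℝ := PiTensorProduct.lift φ.toMultilinearMap
    let Ψ : (⨂[ℝ] j, E j) ⊗[ℝ] F →ₗ[ℝ] ℝ :=
      TensorProduct.lift ((LinearMap.mul ℝ ℝ).compl₁₂ Φ (g : F →ₗ[ℝ] ℝ))
    have hterm : ∀ i, lam i * φ (x i) * g (y i)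
        = Ψ (lam i • ((⨂ₜ[ℝ] j, x i j) ⊗ₜ[ℝ] y i)) := by
      intro i
      rw [map_smul]
      simp only [Ψ, Φ, TensorProduct.lift.tmul, LinearMap.compl₁₂_apply, LinearMap.mul_apply',
        PiTensorProduct.lift.tprod, ContinuousMultilinearMap.coe_coe,
        ContinuousLinearMap.coe_coe, smul_eq_mul]
      ring
    rw [Finset.sum_congr rfl fun i _ => hterm i, ← map_sum, hu, map_zero]
  · intro H
    -- Step A: drop positivity, keeping continuity
    have stepA : ∀ (f : ∀ j, E j →L[ℝ] ℝ) (g : F →L[ℝ] ℝ),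
        ∑ i, lam i * (∏ j, f j (x i j)) * g (y i) = 0 := by
      have R : ∀ (k : ℕ) (f : ∀ j, E j →L[ℝ] ℝ),
          (∀ j : Fin m, k ≤ (j : ℕ) → ∀ z, 0 ≤ z → 0 ≤ f j z) →
          ∀ g : F →L[ℝ] ℝ, (∀ z, 0 ≤ z → 0 ≤ g z) →
          ∑ i, lam i * (∏ j, f j (x i j)) * g (y i) = 0 := by
        intro k
        induction k with
        | zero =>
          intro f hf g hg
          have := H ((ContinuousMultilinearMap.mkPiAlgebra ℝ (Fin m) ℝ).compContinuousLinearMap f)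
            g (fun z hz => by
              simp only [ContinuousMultilinearMap.compContinuousLinearMap_apply,
                ContinuousMultilinearMap.mkPiAlgebra_apply]
              exact Finset.prod_nonneg fun j _ => hf j (Nat.zero_le _) _ (hz j)) hg
          simpa only [ContinuousMultilinearMap.compContinuousLinearMap_apply,
            ContinuousMultilinearMap.mkPiAlgebra_apply] using this
        | succ k ihk =>
          intro f hf g hg
          by_cases hk : k < m
          · set j₀ : Fin m := ⟨k, hk⟩ with hj₀def
            obtain ⟨p, q, hp, hq, hpq⟩ := posDecomp (f j₀)
            have hup : ∀ (h : E j₀ →L[ℝ] ℝ), (∀ z, 0 ≤ z → 0 ≤ h z) →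
                ∀ j : Fin m, k ≤ (j : ℕ) → ∀ z, 0 ≤ z → 0 ≤ (Function.update f j₀ h) j z := by
              intro h hhp j hj z hz
              rcases eq_or_ne j j₀ with rfl | hne
              · rw [Function.update_self]; exact hhp z hz
              · rw [Function.update_of_ne hne]
                refine hf j ?_ z hz
                have hjk : (j : ℕ) ≠ k := fun hc => hne (Fin.ext (by rw [hj₀def]; exact hc))
                omega
            have h1 := ihk (Function.update f j₀ p) (hup p hp) g hg
            have h2 := ihk (Function.update f j₀ q) (hup q hq) g hg
            calc ∑ i, lam i * (∏ j, f j (x i j)) * g (y i)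
                = ∑ i, (lam i * (∏ j, (Function.update f j₀ p) j (x i j)) * g (y i)
                    - lam i * (∏ j, (Function.update f j₀ q) j (x i j)) * g (y i)) := by
                  apply Finset.sum_congr rfl; intro i _
                  rw [prod_update_eval f j₀ p (fun j φ => φ (x i j)),
                    prod_update_eval f j₀ q (fun j φ => φ (x i j)),
                    ← Finset.mul_prod_erase Finset.univ (fun j => f j (x i j))
                      (Finset.mem_univ j₀), hpq (x i j₀)]
                  ring
              _ = 0 := by rw [Finset.sum_sub_distrib, h1, h2, sub_zero]
          · refine ihk f (fun j hj => ?_) g hg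
            exact ((not_lt.mpr hj) (lt_of_lt_of_le j.isLt (not_lt.mp hk))).elim
      intro f g
      obtain ⟨pg, qg, hpg, hqg, hgdec⟩ := posDecomp g
      have h1 := R m f (fun j hj => absurd j.isLt (not_lt.mpr hj)) pg hpg
      have h2 := R m f (fun j hj => absurd j.isLt (not_lt.mpr hj)) qg hqg
      calc ∑ i, lam i * (∏ j, f j (x i j)) * g (y i)
          = ∑ i, (lam i * (∏ j, f j (x i j)) * pg (y i)
              - lam i * (∏ j, f j (x i j)) * qg (y i)) := by
            apply Finset.sum_congr rfl; intro i _; rw [hgdec (y i)]; ring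
        _ = 0 := by rw [Finset.sum_sub_distrib, h1, h2, sub_zero]
    -- Step B: drop continuity
    have stepB : ∀ (f : ∀ j, E j →ₗ[ℝ] ℝ) (g : F →ₗ[ℝ] ℝ),
        ∑ i, lam i * (∏ j, f j (x i j)) * g (y i) = 0 := by
      have Q : ∀ (k : ℕ) (f : ∀ j, E j →ₗ[ℝ] ℝ),
          (∀ j : Fin m, k ≤ (j : ℕ) → Continuous (f j)) →
          ∀ g : F →ₗ[ℝ] ℝ, ∑ i, lam i * (∏ j, f j (x i j)) * g (y i) = 0 := by
        intro k
        induction k with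
        | zero =>
          intro f hf g
          have hv0 : (∑ i, (lam i * ∏ j, f j (x i j)) • y i : F) = 0 := by
            apply NormedSpace.eq_zero_of_forall_dual_eq_zero ℝ
            intro g'
            rw [map_sum, ← stepA (fun j => ⟨f j, hf j (Nat.zero_le _)⟩) g']
            apply Finset.sum_congr rfl
            intro i _
            rw [map_smul, smul_eq_mul]
            simp only [ContinuousLinearMap.coe_mk']
          calc ∑ i, lam i * (∏ j, f j (x i j)) * g (y i)
              = g (∑ i, (lam i * ∏ j, f j (x i j)) • y i) := by
                rw [map_sum]
                apply Finset.sum_congr rfl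
                intro i _
                rw [map_smul, smul_eq_mul]
            _ = 0 := by rw [hv0, map_zero]
        | succ k ihk =>
          intro f hf g
          by_cases hk : k < m
          · set j₀ : Fin m := ⟨k, hk⟩ with hj₀def
            have hw0 : (∑ i, (lam i * (∏ j ∈ Finset.univ.erase j₀, f j (x i j)) * g (y i))
                • x i j₀ : E j₀) = 0 := by
              apply NormedSpace.eq_zero_of_forall_dual_eq_zero ℝ
              intro h
              have hcont : ∀ j : Fin m, k ≤ (j : ℕ) →
                  Continuous ((Function.update f j₀ (↑h : E j₀ →ₗ[ℝ] ℝ)) j) := by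
                intro j hj
                rcases eq_or_ne j j₀ with rfl | hne
                · rw [Function.update_self]
                  exact (ContinuousLinearMap.coe_coe h) ▸ h.continuous
                · rw [Function.update_of_ne hne]
                  refine hf j ?_
                  have hjk : (j : ℕ) ≠ k := fun hc => hne (Fin.ext (by rw [hj₀def]; exact hc))
                  omega
              rw [map_sum, ← ihk (Function.update f j₀ (↑h : E j₀ →ₗ[ℝ] ℝ)) hcont g]
              apply Finset.sum_congr rfl
              intro i _
              rw [map_smul, smul_eq_mul,
                prod_update_eval f j₀ (↑h : E j₀ →ₗ[ℝ] ℝ) (fun j φ => φ (x i j))]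
              simp only [ContinuousLinearMap.coe_coe]
              ring
            have happ := congrArg (f j₀) hw0
            rw [map_sum, map_zero] at happ
            simp_rw [map_smul, smul_eq_mul] at happ
            calc ∑ i, lam i * (∏ j, f j (x i j)) * g (y i)
                = ∑ i, (lam i * (∏ j ∈ Finset.univ.erase j₀, f j (x i j)) * g (y i))
                    * f j₀ (x i j₀) := by
                  apply Finset.sum_congr rfl
                  intro i _
                  rw [← Finset.mul_prod_erase Finset.univ (fun j => f j (x i j))
                    (Finset.mem_univ j₀)]
                  ring
              _ = 0 := happ
          · refine ihk f (fun j hj => ?_) g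
            exact ((not_lt.mpr hj) (lt_of_lt_of_le j.isLt (not_lt.mp hk))).elim
      intro f g
      exact Q m f (fun j hj => absurd j.isLt (not_lt.mpr hj)) g
    -- Final assembly
    have key : ∀ g : F →ₗ[ℝ] ℝ, ∑ i, (lam i * g (y i)) • (⨂ₜ[ℝ] j, x i j) = 0 := by
      intro g
      apply pit_sep m E n (fun i => lam i * g (y i)) x
      intro f
      rw [← stepB f g]
      apply Finset.sum_congr rfl
      intro i _
      ring
    have main : ∑ i, (y i) ⊗ₜ[ℝ] (lam i • (⨂ₜ[ℝ] j, x i j)) = 0 := by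
      apply pair_sep
      intro g
      rw [← key g]
      apply Finset.sum_congr rfl
      intro i _
      rw [smul_smul, mul_comm]
    have hcomm := congrArg (TensorProduct.comm ℝ F ((⨂[ℝ] j, E j))) main
    rw [map_sum, map_zero] at hcomm
    simp only [TensorProduct.comm_tmul] at hcomm
    calc ∑ i, lam i • ((⨂ₜ[ℝ] j, x i j) ⊗ₜ[ℝ] y i)
        = ∑ i, (lam i • (⨂ₜ[ℝ] j, x i j)) ⊗ₜ[ℝ] y i := by
          apply Finset.sum_congr rfl; intro i _; rw [TensorProduct.smul_tmul']
      _ = 0 := hcomm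
end
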